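/- Let Ω ⊂ ℝⁿ be an open set and 1 ≤ k ≤ n. Let u ∈ A_k(Ω), i.e. u is viscosity k-superaffine on Ω, and let v ∈ C²(Ω) satisfy λ₁(∇²v)(x) + ⋯ + λ_k(∇²v)(x) ≥ 0 for all x ∈ Ω and sup_Ω v < ∞. Then u − v ∈ A₁(Ω), i.e. u − v is viscosity 1-superaffine on Ω. -/

import Mathlib

open Filter Metric Set MeasureTheory Topology

attribute [local instance] Matrix.normedAddCommGroup Matrix.normedSpace

noncomputable section

/-- The Hessian matrix `∇²u(x)` of `u : ℝⁿ → ℝ` at `x`. -/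
def hessianMatrix (n : ℕ) (u : EuclideanSpace ℝ (Fin n) → ℝ)
    (x : EuclideanSpace ℝ (Fin n)) : Matrix (Fin n) (Fin n) ℝ :=
  fun i j => iteratedFDeriv ℝ 2 u x ![EuclideanSpace.single i 1, EuclideanSpace.single j 1]

/-- The eigenvalues `λ₁(M) ≤ ⋯ ≤ λₙ(M)` of a real symmetric matrix `M`, in
nondecreasing order (junk value if `M` is not symmetric): `sortedEig n M i = λ_{i+1}(M)`. -/
def sortedEig (n : ℕ) (M : Matrix (Fin n) (Fin n) ℝ) : Fin n → ℝ :=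
  if hM : M.IsHermitian then hM.eigenvalues ∘ Tuple.sort hM.eigenvalues else 0

/-- `λ₁(M) + ⋯ + λ_k(M)`, the sum of the `k` smallest eigenvalues of `M`. -/
def sumLowEig (n k : ℕ) (M : Matrix (Fin n) (Fin n) ℝ) : ℝ :=
  ∑ i ∈ Finset.univ.filter fun i : Fin n => (i : ℕ) < k, sortedEig n M i

/-- Condition (★) with radius `rbar`: for every vector `V`, the function
`w(x) = u(x) + V·x` satisfies `inf_{B_r ∖ {0}} w = min_{∂B_r} w` for all `0 < r < rbar`
(the minimum on the sphere is attained and equals the infimum over the punctured ball). -/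
def StarCond (n : ℕ) (u : EuclideanSpace ℝ (Fin n) → ℝ) (rbar : ℝ) : Prop :=
  ∀ V : EuclideanSpace ℝ (Fin n), ∀ r : ℝ, 0 < r → r < rbar →
    IsLeast ((fun x => u x + (inner ℝ V x : ℝ)) '' sphere (0 : EuclideanSpace ℝ (Fin n)) r)
      (sInf ((fun x => u x + (inner ℝ V x : ℝ)) '' (ball (0 : EuclideanSpace ℝ (Fin n)) r \ {0})))

/-- The matrix `(∂G/∂M_ij)` of partial derivatives of a function `G` of a matrix variable. -/
def derivMatrix (n : ℕ) (G : Matrix (Fin n) (Fin n) ℝ → ℝ) (M : Matrix (Fin n) (Fin n) ℝ) :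
    Matrix (Fin n) (Fin n) ℝ :=
  fun i j => fderiv ℝ G M (Matrix.single i j 1)

/-- `u` is viscosity `k`-superaffine on `Ω` (`u ∈ A_k(Ω)`): `u` is lower semicontinuous
and bounded below on `Ω`, and whenever a `C²` test function `φ` touches `u` from below at a
point of `Ω`, the sum of the `k` smallest eigenvalues of `∇²φ` there is `≤ 0`. -/
def ViscositySuperaffine (n k : ℕ) (Ω : Set (EuclideanSpace ℝ (Fin n)))
    (u : EuclideanSpace ℝ (Fin n) → ℝ) : Prop :=
  LowerSemicontinuousOn u Ω ∧ BddBelow (u '' Ω) ∧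
  ∀ φ : EuclideanSpace ℝ (Fin n) → ℝ, ContDiffOn ℝ 2 φ Ω → (∀ x ∈ Ω, φ x ≤ u x) →
    ∀ x ∈ Ω, φ x = u x → sumLowEig n k (hessianMatrix n φ x) ≤ 0

section Helpers
open RealInnerProductSpace

lemma filter_lt_eq_map (n k : ℕ) (hk : k ≤ n) :
    (Finset.univ.filter fun i : Fin n => (i : ℕ) < k) =
      Finset.map (Fin.castLEEmb hk) Finset.univ := by
  ext i
  simp only [Finset.mem_filter, Finset.mem_univ, true_and, Finset.mem_map]
  constructor
  · intro h
    exact ⟨⟨i, h⟩, by simp [Fin.castLEEmb]⟩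
  · rintro ⟨j, rfl⟩
    simp


lemma comb_lemma (n k : ℕ) (hk1 : 1 ≤ k) (hk : k ≤ n) (g s : Fin n → ℝ)
    (hg : Monotone g) (hs0 : ∀ i, 0 ≤ s i) (hs1 : ∀ i, s i ≤ 1)
    (hsum : ∑ i, s i = (k : ℝ)) :
    ∑ i ∈ Finset.univ.filter (fun i : Fin n => (i : ℕ) < k), g i ≤ ∑ i, g i * s i := by
  have hkn : k - 1 < n := by omega
  set m : ℝ := g ⟨k - 1, hkn⟩ with hm
  have hcard : ((Finset.univ.filter fun i : Fin n => (i : ℕ) < k).card : ℝ) = (k : ℝ) := by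
    rw [filter_lt_eq_map n k hk, Finset.card_map, Finset.card_univ, Fintype.card_fin]
  have hnonneg : 0 ≤ ∑ i, (g i - m) * (s i - if (i : ℕ) < k then (1:ℝ) else 0) := by
    apply Finset.sum_nonneg
    intro i _
    by_cases h : (i : ℕ) < k
    · rw [if_pos h]
      have h1 : g i ≤ m := hg (by rw [Fin.le_def]; simp; omega)
      nlinarith [hs1 i]
    · rw [if_neg h]
      have h1 : m ≤ g i := hg (by rw [Fin.le_def]; simp; omega)
      nlinarith [hs0 i]
  have expand : ∑ i, (g i - m) * (s i - if (i : ℕ) < k then (1:ℝ) else 0) =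
      (∑ i, g i * s i) - (∑ i ∈ Finset.univ.filter (fun i : Fin n => (i : ℕ) < k), g i)
        - m * (∑ i, s i)
        + m * ((Finset.univ.filter fun i : Fin n => (i : ℕ) < k).card : ℝ) := by
    rw [Finset.sum_filter]
    rw [← Finset.sum_boole (p := fun i : Fin n => (i : ℕ) < k)]
    simp only [Finset.mul_sum, ← Finset.sum_sub_distrib, ← Finset.sum_add_distrib]
    apply Finset.sum_congr rfl
    intro i _
    by_cases h : (i : ℕ) < k <;> simp [h] <;> ring
  rw [expand, hcard, hsum] at hnonneg
  linarith


/-- The quadratic form of a matrix. -/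
def qf (n : ℕ) (M : Matrix (Fin n) (Fin n) ℝ) (x : EuclideanSpace ℝ (Fin n)) : ℝ :=
  ⟪x, Matrix.toEuclideanLin M x⟫

lemma qf_add (n : ℕ) (A B : Matrix (Fin n) (Fin n) ℝ) (x : EuclideanSpace ℝ (Fin n)) :
    qf n (A + B) x = qf n A x + qf n B x := by
  unfold qf
  rw [map_add, LinearMap.add_apply, inner_add_right]

lemma toEuclideanLin_eigen {n : ℕ} {B : Matrix (Fin n) (Fin n) ℝ} (hB : B.IsHermitian) (j : Fin n) :
    Matrix.toEuclideanLin B (hB.eigenvectorBasis j) = hB.eigenvalues j • hB.eigenvectorBasis j := by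
  apply (WithLp.equiv 2 (Fin n → ℝ)).injective
  rw [WithLp.equiv_apply, Matrix.piLp_ofLp_toEuclideanLin]
  have := hB.mulVec_eigenvectorBasis j
  simpa [Matrix.toLin'_apply] using this

lemma qf_eigen {n : ℕ} {B : Matrix (Fin n) (Fin n) ℝ} (hB : B.IsHermitian) (j : Fin n) :
    qf n B (hB.eigenvectorBasis j) = hB.eigenvalues j := by
  unfold qf
  rw [toEuclideanLin_eigen hB j, inner_smul_right, real_inner_self_eq_norm_sq,
    hB.eigenvectorBasis.orthonormal.1 j]
  simp

/-- Spectral expansion of the quadratic form. -/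
lemma qf_expand {n : ℕ} {B : Matrix (Fin n) (Fin n) ℝ} (hB : B.IsHermitian)
    (x : EuclideanSpace ℝ (Fin n)) :
    qf n B x = ∑ j, hB.eigenvalues j * ⟪hB.eigenvectorBasis j, x⟫ ^ 2 := by
  have hTx : Matrix.toEuclideanLin B x
      = ∑ j, (hB.eigenvalues j * ⟪hB.eigenvectorBasis j, x⟫) • hB.eigenvectorBasis j := by
    conv_lhs => rw [← hB.eigenvectorBasis.sum_repr' x]
    rw [map_sum]
    apply Finset.sum_congr rfl
    intro j _
    rw [_root_.map_smul, toEuclideanLin_eigen hB j, smul_smul, mul_comm]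
  unfold qf
  rw [hTx, inner_sum]
  apply Finset.sum_congr rfl
  intro j _
  rw [inner_smul_right, real_inner_comm x]
  ring

lemma sortedEig_herm {n : ℕ} {B : Matrix (Fin n) (Fin n) ℝ} (hB : B.IsHermitian) :
    sortedEig n B = hB.eigenvalues ∘ Tuple.sort hB.eigenvalues := by
  rw [sortedEig, dif_pos hB]

lemma kyFan {n k : ℕ} (hk1 : 1 ≤ k) (hk : k ≤ n) (B : Matrix (Fin n) (Fin n) ℝ)
    (hB : B.IsHermitian) {ι : Type} [Fintype ι] (v : ι → EuclideanSpace ℝ (Fin n))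
    (hv : Orthonormal ℝ v) (hcard : Fintype.card ι = k) :
    sumLowEig n k B ≤ ∑ i, qf n B (v i) := by
  classical
  set w := hB.eigenvectorBasis with hw
  set μ := hB.eigenvalues with hμ
  set t : Fin n → ℝ := fun j => ∑ i, ⟪w j, v i⟫ ^ 2 with htdef
  have ht0 : ∀ j, 0 ≤ t j := fun j => Finset.sum_nonneg fun i _ => sq_nonneg _
  have ht1 : ∀ j, t j ≤ 1 := by
    intro j
    have hb := hv.sum_inner_products_le (𝕜 := ℝ) (s := Finset.univ) (w j)
    have hwj : ‖w j‖ = 1 := w.orthonormal.1 j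
    calc t j = ∑ i, ‖⟪v i, w j⟫‖ ^ 2 := by
              apply Finset.sum_congr rfl; intro i _
              rw [real_inner_comm, Real.norm_eq_abs, sq_abs]
      _ ≤ ‖w j‖ ^ 2 := hb
      _ = 1 := by rw [hwj]; norm_num
  have hone : ∀ i : ι, ∑ j, ⟪w j, v i⟫ ^ 2 = 1 := by
    intro i
    have := w.sum_inner_mul_inner (v i) (v i)
    have hvi : ⟪v i, v i⟫ = (1 : ℝ) := by
      rw [real_inner_self_eq_norm_sq, hv.1 i]; norm_num
    rw [hvi] at this
    rw [← this]
    apply Finset.sum_congr rfl; intro j _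
    rw [real_inner_comm (v i)]; ring
  have htsum : ∑ j, t j = (k : ℝ) := by
    simp only [htdef]
    rw [Finset.sum_comm]
    simp only [hone]
    simp [hcard]
  have hRHS : ∑ i, qf n B (v i) = ∑ j, μ j * t j := by
    simp only [fun i : ι => qf_expand hB (v i)]
    rw [Finset.sum_comm]
    simp only [htdef, Finset.mul_sum]
    rfl
  set σ := Tuple.sort μ with hσ
  have hsum2 : ∑ j, μ j * t j = ∑ i, (μ ∘ σ) i * (t ∘ σ) i := by
    simp only [Function.comp_apply]
    exact (Equiv.sum_comp σ (fun j => μ j * t j)).symm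
  have hcomb := comb_lemma n k hk1 hk (μ ∘ σ) (t ∘ σ)
    (Tuple.monotone_sort μ)
    (fun i => ht0 _) (fun i => ht1 _)
    (by simp only [Function.comp_apply]; rw [Equiv.sum_comp σ t]; exact htsum)
  have hlhs : sumLowEig n k B
      = ∑ i ∈ Finset.univ.filter (fun i : Fin n => (i : ℕ) < k), (μ ∘ σ) i := by
    rw [sumLowEig]
    apply Finset.sum_congr rfl
    intro i _
    rw [sortedEig_herm hB]
  rw [hlhs, hRHS, hsum2]
  exact hcomb

lemma key_matrix_ineq (n k : ℕ) (hk1 : 1 ≤ k) (hk2 : k ≤ n) (A B : Matrix (Fin n) (Fin n) ℝ)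
    (hA : A.IsHermitian) (hB : B.IsHermitian)
    (hC : sumLowEig n k (A + B) ≤ 0) (hB0 : 0 ≤ sumLowEig n k B) :
    sumLowEig n 1 A ≤ 0 := by
  classical
  have hCh : (A + B).IsHermitian := hA.add hB
  set σ := Tuple.sort hCh.eigenvalues with hσ
  set v : Fin k → EuclideanSpace ℝ (Fin n) :=
    (⇑hCh.eigenvectorBasis) ∘ fun i : Fin k => σ (Fin.castLE hk2 i) with hvdef
  have hinj : Function.Injective (fun i : Fin k => σ (Fin.castLE hk2 i)) :=
    σ.injective.comp (Fin.castLE_injective hk2)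
  have hon : Orthonormal ℝ v := hCh.eigenvectorBasis.orthonormal.comp _ hinj
  have hsumC : sumLowEig n k (A + B) = ∑ i : Fin k, qf n (A + B) (v i) := by
    rw [sumLowEig, filter_lt_eq_map n k hk2, Finset.sum_map]
    apply Finset.sum_congr rfl
    intro i _
    rw [sortedEig_herm hCh]
    simp only [hvdef, Function.comp_apply, qf_eigen hCh]
    rfl
  have h1n : 1 ≤ n := le_trans hk1 hk2
  have hAlow : ∀ i : Fin k, sumLowEig n 1 A ≤ qf n A (v i) := by
    intro i
    have h := kyFan le_rfl h1n A hA (fun _ : Fin 1 => v i)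
      (hon.comp (fun _ => i) (fun a b _ => Subsingleton.elim a b)) (by simp)
    simpa using h
  have hBlow : sumLowEig n k B ≤ ∑ i : Fin k, qf n B (v i) :=
    kyFan hk1 hk2 B hB v hon (by simp)
  have hsplit : ∑ i : Fin k, qf n (A + B) (v i)
      = (∑ i : Fin k, qf n A (v i)) + ∑ i : Fin k, qf n B (v i) := by
    rw [← Finset.sum_add_distrib]
    exact Finset.sum_congr rfl fun i _ => qf_add n A B (v i)
  have hk' : (k : ℝ) * sumLowEig n 1 A ≤ ∑ i : Fin k, qf n A (v i) := by
    calc (k : ℝ) * sumLowEig n 1 A = ∑ _i : Fin k, sumLowEig n 1 A := by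
          simp [Finset.sum_const, mul_comm]
      _ ≤ ∑ i : Fin k, qf n A (v i) := Finset.sum_le_sum fun i _ => hAlow i
  have hkpos : (1 : ℝ) ≤ (k : ℝ) := by exact_mod_cast hk1
  nlinarith [hsumC ▸ hC, hsplit, hBlow, hk', hkpos]

lemma hessian_isHermitian {n : ℕ} {f : EuclideanSpace ℝ (Fin n) → ℝ}
    {x : EuclideanSpace ℝ (Fin n)} (hf : ContDiffAt ℝ 2 f x) :
    (hessianMatrix n f x).IsHermitian := by
  have hs := hf.isSymmSndFDerivAt (by simp)
  ext i j
  simp only [Matrix.conjTranspose_apply, hessianMatrix, star_trivial,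
    iteratedFDeriv_two_apply, Matrix.cons_val_zero, Matrix.cons_val_one, Matrix.head_cons]
  exact hs.eq _ _

lemma hessian_add {n : ℕ} {Ω : Set (EuclideanSpace ℝ (Fin n))} (hΩ : IsOpen Ω)
    {f g : EuclideanSpace ℝ (Fin n) → ℝ}
    (hf : ContDiffOn ℝ 2 f Ω) (hg : ContDiffOn ℝ 2 g Ω)
    {x : EuclideanSpace ℝ (Fin n)} (hx : x ∈ Ω) :
    hessianMatrix n (fun y => f y + g y) x = hessianMatrix n f x + hessianMatrix n g x := by
  ext i j
  have h1 : iteratedFDeriv ℝ 2 (fun y => f y + g y) x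
      = iteratedFDeriv ℝ 2 f x + iteratedFDeriv ℝ 2 g x := by
    rw [← iteratedFDerivWithin_of_isOpen 2 hΩ hx, ← iteratedFDerivWithin_of_isOpen 2 hΩ hx
        (f := f), ← iteratedFDerivWithin_of_isOpen 2 hΩ hx (f := g)]
    exact iteratedFDerivWithin_add_apply' (hf x hx) (hg x hx) hΩ.uniqueDiffOn hx
  simp only [hessianMatrix, Matrix.add_apply, h1, ContinuousMultilinearMap.add_apply]

end Helpers

/-- Lemma D.4: subtracting a `C²` function `v` with
`λ₁(∇²v) + ⋯ + λ_k(∇²v) ≥ 0` from a viscosity `k`-superaffine function yields a viscosity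
1-superaffine function. -/
theorem stmt_15 (n k : ℕ) (hk1 : 1 ≤ k) (hk2 : k ≤ n)
    (Ω : Set (EuclideanSpace ℝ (Fin n))) (hΩopen : IsOpen Ω)
    (u : EuclideanSpace ℝ (Fin n) → ℝ) (hu : ViscositySuperaffine n k Ω u)
    (v : EuclideanSpace ℝ (Fin n) → ℝ) (hv : ContDiffOn ℝ 2 v Ω)
    (hvk : ∀ x ∈ Ω, 0 ≤ sumLowEig n k (hessianMatrix n v x))
    (hvbdd : BddAbove (v '' Ω)) :
    ViscositySuperaffine n 1 Ω (fun x => u x - v x) := by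
  obtain ⟨hlsc, hbdd, hvisc⟩ := hu
  refine ⟨?_, ?_, ?_⟩
  · have h1 : LowerSemicontinuousOn (fun x => u x + -v x) Ω :=
      hlsc.add ((hv.continuousOn.neg).lowerSemicontinuousOn)
    simpa [sub_eq_add_neg] using h1
  · obtain ⟨m, hm⟩ := hbdd
    obtain ⟨M, hM⟩ := hvbdd
    refine ⟨m - M, ?_⟩
    rintro _ ⟨x, hx, rfl⟩
    exact sub_le_sub (hm ⟨x, hx, rfl⟩) (hM ⟨x, hx, rfl⟩)
  · intro φ hφ hφle xb hxb hφeq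
    have hψ : ContDiffOn ℝ 2 (fun y => φ y + v y) Ω := hφ.add hv
    have hψle : ∀ x ∈ Ω, φ x + v x ≤ u x := by
      intro x hx
      have := hφle x hx
      simp only at this
      linarith
    have hψeq : φ xb + v xb = u xb := by
      simp only at hφeq
      linarith
    have hCle := hvisc (fun y => φ y + v y) hψ hψle xb hxb hψeq
    rw [hessian_add hΩopen hφ hv hxb] at hCle
    have hAh : (hessianMatrix n φ xb).IsHermitian :=
      hessian_isHermitian (hφ.contDiffAt (hΩopen.mem_nhds hxb))
    have hBh : (hessianMatrix n v xb).IsHermitian :=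
      hessian_isHermitian (hv.contDiffAt (hΩopen.mem_nhds hxb))
    exact key_matrix_ineq n k hk1 hk2 _ _ hAh hBh hCle (hvk xb hxb)
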